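/- Let n ≥ 1 and work on EuclideanSpace ℝ (Fin (n+1)) with quadratic form Q x = -‖x‖², Clifford algebra Cl = CliffordAlgebra Q and embedding ι. Let m ≥ 1 and let h : EuclideanSpace ℝ (Fin (n+1)) → Cl be a polynomial map (each coordinate with respect to a basis of Cl is a polynomial function) that is homogeneous of degree m and harmonic (∑_i (∂_i ∂_i h)(x) = 0 for all x). Then h decomposes uniquely as h(x) = p(x) + ι(x) * q(x), where p and q are polynomial maps into Cl, homogeneous of degrees m and m−1 respectively, and both left monogenic: ∑_i ι(e_i) * (∂_i p)(x) = 0 and ∑_i ι(e_i) * (∂_i q)(x) = 0 for all x. (This is the decomposition H_m = P_m ⊕ Q-part underlying L²(S^n) = ⊕_m (P_m ⊕ Q_m).) -/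

import Mathlib

open Function
open scoped ENNReal

noncomputable section

/-- The inclusion of finitely supported functions into `ℓ^∞`. -/
def finsuppToLp (ι : Type*) : (ι →₀ ℝ) →ₗ[ℝ] lp (fun _ : ι => ℝ) ∞ where
  toFun v := ⟨fun i => v i, by
    apply memℓp_infty
    apply Set.Finite.bddAbove
    apply Set.Finite.subset ((v.support.finite_toSet.image (fun i => ‖v i‖)).insert 0)
    rintro - ⟨i, rfl⟩
    by_cases h : v i = 0
    · simp [h]
    · exact Set.mem_insert_of_mem _ ⟨i, by simpa [Finsupp.mem_support_iff] using h, rfl⟩⟩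
  map_add' v w := by ext i; rfl
  map_smul' c v := by ext i; rfl

lemma finsuppToLp_injective (ι : Type*) : Injective (finsuppToLp ι) := by
  intro v w h
  ext i
  exact congrArg (fun f : lp (fun _ : ι => ℝ) ∞ => (f : ι → ℝ) i) h

/-- A norm on an arbitrary real vector space, obtained from a Hamel basis and the embedding
into `ℓ^∞`.  This makes the Fréchet derivative available for Clifford-algebra valued maps;
since the Clifford algebra of a finite-dimensional quadratic space is finite dimensional,
all norms on it are equivalent, so the statements below do not depend on this choice. -/
def Module.toNormedAddCommGroup (V : Type*) [AddCommGroup V] [Module ℝ V] :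
    NormedAddCommGroup V :=
  NormedAddCommGroup.induced V _
    ((finsuppToLp _).comp (Basis.ofVectorSpace ℝ V).repr.toLinearMap)
    ((finsuppToLp_injective _).comp (Basis.ofVectorSpace ℝ V).repr.injective)

def Module.toNormedSpace (V : Type*) [AddCommGroup V] [Module ℝ V] :
    @NormedSpace ℝ V _ (Module.toNormedAddCommGroup V).toSeminormedAddCommGroup :=
  NormedSpace.induced ℝ V _ ((finsuppToLp _).comp (Basis.ofVectorSpace ℝ V).repr.toLinearMap)

noncomputable instance {n : ℕ} (Q : QuadraticForm ℝ (EuclideanSpace ℝ (Fin n))) :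
    NormedAddCommGroup (CliffordAlgebra Q) := Module.toNormedAddCommGroup _

noncomputable instance {n : ℕ} (Q : QuadraticForm ℝ (EuclideanSpace ℝ (Fin n))) :
    NormedSpace ℝ (CliffordAlgebra Q) := Module.toNormedSpace _

/-- The standard orthonormal basis vector `e i` of Euclidean space. -/
def e {n : ℕ} (i : Fin n) : EuclideanSpace ℝ (Fin n) := EuclideanSpace.single i 1

/-- A map into a real vector space is a *polynomial map* if, in terms of some finite family
of vectors (e.g. a basis), each component is a polynomial function of the coordinates. -/
def IsPolynomialMap {k : ℕ} {V : Type*} [AddCommGroup V] [Module ℝ V]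
    (f : EuclideanSpace ℝ (Fin k) → V) : Prop :=
  ∃ (N : ℕ) (P : Fin N → MvPolynomial (Fin k) ℝ) (v : Fin N → V),
    ∀ x, f x = ∑ j, MvPolynomial.eval (fun i => x i) (P j) • v j

open MvPolynomial in
lemma proj_apply' {k : ℕ} (i : Fin k) (x : EuclideanSpace ℝ (Fin k)) :
    (EuclideanSpace.proj i : EuclideanSpace ℝ (Fin k) →L[ℝ] ℝ) x = x i := rfl

lemma e_apply {k : ℕ} (i j : Fin k) : (e i : EuclideanSpace ℝ (Fin k)) j = if j = i then 1 else 0 :=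
  EuclideanSpace.single_apply i 1 j

lemma sum_smul_e {k : ℕ} (x : EuclideanSpace ℝ (Fin k)) : ∑ i, x i • e i = x := by
  ext j
  have : (∑ i, x i • e i : EuclideanSpace ℝ (Fin k)) j = ∑ i, (x i • e i : EuclideanSpace ℝ (Fin k)) j := by
    rw [WithLp.ofLp_sum, Finset.sum_apply]
  rw [this]
  simp [e_apply]

open MvPolynomial in
lemma pderiv_comm' {k : ℕ} (i j : Fin k) (p : MvPolynomial (Fin k) ℝ) :
    pderiv i (pderiv j p) = pderiv j (pderiv i p) := by
  induction p using MvPolynomial.induction_on with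
  | C a => simp
  | add p q hp hq => simp [hp, hq]
  | mul_X p l ih =>
    simp only [pderiv_mul, pderiv_X, map_add, pderiv_mul, ih, Pi.single_apply]
    split_ifs <;> simp <;> ring

open MvPolynomial in
lemma hasFDerivAt_eval {k : ℕ} (P : MvPolynomial (Fin k) ℝ) (x : EuclideanSpace ℝ (Fin k)) :
    HasFDerivAt (fun y : EuclideanSpace ℝ (Fin k) => MvPolynomial.eval (fun i => y i) P)
      (∑ i, MvPolynomial.eval (fun i => x i) (MvPolynomial.pderiv i P) •
        (EuclideanSpace.proj i : EuclideanSpace ℝ (Fin k) →L[ℝ] ℝ)) x := by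
  induction P using MvPolynomial.induction_on with
  | C a =>
    simp only [eval_C, pderiv_C, map_zero, zero_smul, Finset.sum_const_zero]
    exact hasFDerivAt_const a x
  | add p q hp hq =>
    have h2 := hp.add hq
    simp only [eval_add] at h2 ⊢
    refine h2.congr_fderiv ?_
    ext w
    simp [Finset.sum_add_distrib, add_smul, add_mul, map_add]
  | mul_X p i hp =>
    have hXi : HasFDerivAt (fun y : EuclideanSpace ℝ (Fin k) => y i)
        (EuclideanSpace.proj i : EuclideanSpace ℝ (Fin k) →L[ℝ] ℝ) x :=
      (EuclideanSpace.proj i : EuclideanSpace ℝ (Fin k) →L[ℝ] ℝ).hasFDerivAt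
    have h2 := hp.mul hXi
    simp only [eval_mul, eval_X] at h2 ⊢
    refine h2.congr_fderiv ?_
    ext w
    simp only [ContinuousLinearMap.coe_sum', Finset.sum_apply,
      ContinuousLinearMap.smul_apply, ContinuousLinearMap.add_apply, pderiv_mul, pderiv_X,
      map_add, eval_mul, eval_X, smul_eq_mul, Pi.single_apply, proj_apply']
    symm
    simp only [apply_ite (MvPolynomial.eval fun i => x i), map_one, map_zero, ite_mul, one_mul,
      zero_mul, add_mul]
    rw [Finset.sum_add_distrib, add_comm]
    congr 1
    · rw [Finset.sum_eq_single i] <;> simp +contextual [eq_comm, mul_comm]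
    · rw [Finset.mul_sum]
      exact Finset.sum_congr rfl fun j _ => by ring

/-- A finitely-indexed polynomial combination of vectors. -/
def repFun {k : ℕ} {V : Type*} [AddCommGroup V] [Module ℝ V] {ι : Type*} [Fintype ι]
    (P : ι → MvPolynomial (Fin k) ℝ) (v : ι → V) : EuclideanSpace ℝ (Fin k) → V :=
  fun x => ∑ j, MvPolynomial.eval (fun i => x i) (P j) • v j

section Rep
variable {k : ℕ} {V : Type*} [NormedAddCommGroup V] [NormedSpace ℝ V]
  {ι : Type*} [Fintype ι] (P : ι → MvPolynomial (Fin k) ℝ) (v : ι → V)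

lemma hasFDerivAt_repFun (x : EuclideanSpace ℝ (Fin k)) :
    HasFDerivAt (repFun P v)
      (∑ j, (∑ i, MvPolynomial.eval (fun i => x i) (MvPolynomial.pderiv i (P j)) •
        (EuclideanSpace.proj i : EuclideanSpace ℝ (Fin k) →L[ℝ] ℝ)).smulRight (v j)) x :=
  HasFDerivAt.fun_sum fun j _ => (hasFDerivAt_eval (P j) x).smul_const (v j)

lemma differentiable_repFun : Differentiable ℝ (repFun P v) :=
  fun x => (hasFDerivAt_repFun P v x).differentiableAt

lemma fderiv_repFun (x : EuclideanSpace ℝ (Fin k)) (i : Fin k) :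
    fderiv ℝ (repFun P v) x (e i) =
      repFun (fun j => MvPolynomial.pderiv i (P j)) v x := by
  rw [(hasFDerivAt_repFun P v x).fderiv]
  simp only [repFun, ContinuousLinearMap.coe_sum', Finset.sum_apply,
    ContinuousLinearMap.smulRight_apply, ContinuousLinearMap.coe_smul', Pi.smul_apply,
    proj_apply', e_apply, smul_eq_mul, mul_ite, mul_one, mul_zero]
  refine Finset.sum_congr rfl fun j _ => ?_
  rw [Finset.sum_eq_single i] <;> simp +contextual

lemma isPolynomialMap_repFun : IsPolynomialMap (repFun P v) := by
  classical
  refine ⟨Fintype.card ι, P ∘ (Fintype.equivFin ι).symm, v ∘ (Fintype.equivFin ι).symm,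
    fun x => ?_⟩
  rw [repFun, ← Equiv.sum_comp (Fintype.equivFin ι).symm
    (fun j => MvPolynomial.eval (fun i => x i) (P j) • v j)]
  rfl

end Rep
section Analytic
variable {k : ℕ} {V : Type*} [NormedAddCommGroup V] [NormedSpace ℝ V]

lemma euler_identity (f : EuclideanSpace ℝ (Fin k) → V) (hf : Differentiable ℝ f) (d : ℕ)
    (hhom : ∀ t : ℝ, 0 < t → ∀ x, f (t • x) = t ^ d • f x) (x : EuclideanSpace ℝ (Fin k)) :
    ∑ i, x i • fderiv ℝ f x (e i) = (d : ℝ) • f x := by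
  have hline : HasDerivAt (fun t : ℝ => t • x) x 1 := by
    simpa using (hasDerivAt_id (1 : ℝ)).smul_const x
  have hfd : HasFDerivAt f (fderiv ℝ f x) ((1 : ℝ) • x) := by
    rw [one_smul]; exact (hf x).hasFDerivAt
  have h1 : HasDerivAt (fun t : ℝ => f (t • x)) (fderiv ℝ f x x) 1 :=
    hfd.comp_hasDerivAt 1 hline
  have h2 : HasDerivAt (fun t : ℝ => t ^ d • f x) ((d : ℝ) • f x) 1 := by
    simpa using (hasDerivAt_pow d (1:ℝ)).smul_const (f x)
  have hev : (fun t : ℝ => f (t • x)) =ᶠ[nhds 1] fun t : ℝ => t ^ d • f x := by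
    filter_upwards [lt_mem_nhds (zero_lt_one : (0:ℝ) < 1)] with t ht using hhom t ht x
  have h3 : HasDerivAt (fun t : ℝ => f (t • x)) ((d : ℝ) • f x) 1 :=
    h2.congr_of_eventuallyEq hev
  have key : fderiv ℝ f x x = (d : ℝ) • f x := h1.unique h3
  calc ∑ i, x i • fderiv ℝ f x (e i) = fderiv ℝ f x (∑ i, x i • e i) := by
        rw [map_sum]
        exact Finset.sum_congr rfl fun i _ => ((fderiv ℝ f x).map_smul (x i) (e i)).symm
    _ = (d : ℝ) • f x := by rw [sum_smul_e]; exact key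

lemma hom_fderiv (f : EuclideanSpace ℝ (Fin k) → V) (hf : Differentiable ℝ f) (d : ℕ)
    (hd : 1 ≤ d) (hhom : ∀ t : ℝ, 0 < t → ∀ x, f (t • x) = t ^ d • f x)
    {t : ℝ} (ht : 0 < t) (x w : EuclideanSpace ℝ (Fin k)) :
    fderiv ℝ f (t • x) w = t ^ (d - 1) • fderiv ℝ f x w := by
  obtain ⟨d', rfl⟩ : ∃ d', d = d' + 1 := ⟨d - 1, (Nat.succ_pred_eq_of_pos hd).symm⟩
  have hL : HasFDerivAt (fun y : EuclideanSpace ℝ (Fin k) => t • y)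
      (t • ContinuousLinearMap.id ℝ (EuclideanSpace ℝ (Fin k))) x :=
    (ContinuousLinearMap.id ℝ _).hasFDerivAt.const_smul t
  have h1 : HasFDerivAt (fun y => f (t • y))
      ((fderiv ℝ f (t • x)).comp (t • ContinuousLinearMap.id ℝ _)) x :=
    (hf (t • x)).hasFDerivAt.comp x hL
  have h2 : HasFDerivAt (fun y => f (t • y)) (t ^ (d' + 1) • fderiv ℝ f x) x := by
    have : (fun y : EuclideanSpace ℝ (Fin k) => f (t • y)) =
        fun y => t ^ (d' + 1) • f y := funext (hhom t ht)
    rw [this]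
    exact (hf x).hasFDerivAt.const_smul _
  have key := h1.unique h2
  have := congrArg (fun L : EuclideanSpace ℝ (Fin k) →L[ℝ] V => L w) key
  simp only [ContinuousLinearMap.comp_apply, ContinuousLinearMap.smul_apply,
    ContinuousLinearMap.id_apply] at this
  rw [(fderiv ℝ f (t • x)).map_smul] at this
  have ht0 : t ≠ 0 := ne_of_gt ht
  have := congrArg (fun z => t⁻¹ • z) this
  simp only [smul_smul, inv_mul_cancel₀ ht0, one_smul] at this
  rw [this, Nat.add_sub_cancel, pow_succ]
  congr 1
  field_simp

lemma repFun_sub {ι ι' : Type*} [Fintype ι] [Fintype ι']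
    (P : ι → MvPolynomial (Fin k) ℝ) (v : ι → V)
    (P' : ι' → MvPolynomial (Fin k) ℝ) (v' : ι' → V) (x : EuclideanSpace ℝ (Fin k)) :
    repFun (Sum.elim P P') (Sum.elim v (fun j => -v' j)) x = repFun P v x - repFun P' v' x := by
  simp [repFun, Fintype.sum_sum_type, sub_eq_add_neg, smul_neg, ← Finset.sum_neg_distrib]

end Analytic
section Cliff
open MvPolynomial CliffordAlgebra
variable {n : ℕ} {Q : QuadraticForm ℝ (EuclideanSpace ℝ (Fin (n + 1)))}

lemma fderiv_repFun_cl {ι : Type*} [Fintype ι] (P : ι → MvPolynomial (Fin (n + 1)) ℝ)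
    (v : ι → CliffordAlgebra Q) (x : EuclideanSpace ℝ (Fin (n + 1))) (i : Fin (n + 1)) :
    fderiv ℝ (repFun P v) x (e i) = repFun (fun j => MvPolynomial.pderiv i (P j)) v x :=
  fderiv_repFun P v x i

lemma repFun_sub_cl {ι ι' : Type*} [Fintype ι] [Fintype ι']
    (P : ι → MvPolynomial (Fin (n + 1)) ℝ) (v : ι → CliffordAlgebra Q)
    (P' : ι' → MvPolynomial (Fin (n + 1)) ℝ) (v' : ι' → CliffordAlgebra Q)
    (x : EuclideanSpace ℝ (Fin (n + 1))) :
    repFun (Sum.elim P P') (Sum.elim v (fun j => -v' j)) x = repFun P v x - repFun P' v' x :=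
  repFun_sub P v P' v' x

lemma polar_Q (hQ : ∀ x, Q x = -‖x‖ ^ 2) (a b : EuclideanSpace ℝ (Fin (n + 1))) :
    QuadraticMap.polar Q a b = -(2 * (inner ℝ a b : ℝ)) := by
  simp only [QuadraticMap.polar, hQ, norm_add_sq_real]
  ring

lemma Q_e (hQ : ∀ x, Q x = -‖x‖ ^ 2) (i : Fin (n + 1)) : Q (e i) = -1 := by
  rw [hQ]
  rw [show (e i : EuclideanSpace ℝ (Fin (n+1))) = EuclideanSpace.single i (1:ℝ) from rfl]
  rw [EuclideanSpace.norm_single]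
  norm_num

lemma iota_e_sq (hQ : ∀ x, Q x = -‖x‖ ^ 2) (i : Fin (n + 1)) :
    ι Q (e i) * ι Q (e i) = -1 := by
  rw [ι_sq_scalar, Q_e hQ, map_neg, map_one]

lemma inner_e_left (i : Fin (n + 1)) (x : EuclideanSpace ℝ (Fin (n + 1))) :
    (inner ℝ (e i) x : ℝ) = x i := by
  rw [show (e i : EuclideanSpace ℝ (Fin (n+1))) = EuclideanSpace.single i (1:ℝ) from rfl]
  rw [EuclideanSpace.inner_single_left]
  simp

lemma iota_e_mul_iota (hQ : ∀ x, Q x = -‖x‖ ^ 2) (i : Fin (n + 1))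
    (x : EuclideanSpace ℝ (Fin (n + 1))) :
    ι Q (e i) * ι Q x = (-(2 * x i)) • (1 : CliffordAlgebra Q) - ι Q x * ι Q (e i) := by
  rw [ι_mul_ι_comm, polar_Q hQ, inner_e_left, Algebra.algebraMap_eq_smul_one]

lemma clifford_symm_sum (hQ : ∀ x, Q x = -‖x‖ ^ 2)
    (S : Fin (n + 1) → Fin (n + 1) → CliffordAlgebra Q)
    (hsym : ∀ i j, S i j = S j i) (htr : ∑ i, S i i = 0) :
    ∑ i, ∑ j, ι Q (e i) * ι Q (e j) * S i j = 0 := by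
  have hswap : ∑ i, ∑ j, ι Q (e i) * ι Q (e j) * S i j
      = ∑ i, ∑ j, ι Q (e j) * ι Q (e i) * S i j := by
    rw [Finset.sum_comm]
    exact Finset.sum_congr rfl fun i _ => Finset.sum_congr rfl fun j _ => by rw [hsym]
  have h3 : ∀ i j : Fin (n + 1), ι Q (e i) * ι Q (e j) + ι Q (e j) * ι Q (e i)
      = algebraMap ℝ (CliffordAlgebra Q) (if i = j then -2 else 0) := by
    intro i j
    rw [ι_mul_ι_add_swap, polar_Q hQ, inner_e_left, e_apply]
    congr 1
    split_ifs with h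
    · simp [h]
    · simp [Ne.symm h]
  have h2 : (∑ i, ∑ j, ι Q (e i) * ι Q (e j) * S i j)
      + ∑ i, ∑ j, ι Q (e i) * ι Q (e j) * S i j
      = ∑ i, ∑ j, (ι Q (e i) * ι Q (e j) + ι Q (e j) * ι Q (e i)) * S i j := by
    nth_rewrite 2 [hswap]
    rw [← Finset.sum_add_distrib]
    refine Finset.sum_congr rfl fun i _ => ?_
    rw [← Finset.sum_add_distrib]
    exact Finset.sum_congr rfl fun j _ => by rw [add_mul]
  have h4 : ∑ i, ∑ j, (ι Q (e i) * ι Q (e j) + ι Q (e j) * ι Q (e i)) * S i j = 0 := by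
    have hterm : ∀ i j : Fin (n+1), (ι Q (e i) * ι Q (e j) + ι Q (e j) * ι Q (e i)) * S i j
        = if i = j then (-2 : ℝ) • S i j else 0 := by
      intro i j
      rw [h3]
      by_cases h : i = j
      · rw [if_pos h, if_pos h, Algebra.smul_def]
      · rw [if_neg h, if_neg h, map_zero, zero_mul]
    simp only [hterm]
    rw [Finset.sum_congr rfl fun i _ => Finset.sum_ite_eq Finset.univ i
      (fun j => (-2 : ℝ) • S i j)]
    simp only [Finset.mem_univ, if_true, ← Finset.smul_sum, htr, smul_zero]
  have h5 : (2 : ℝ) • (∑ i, ∑ j, ι Q (e i) * ι Q (e j) * S i j) = 0 := by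
    rw [two_smul, h2, h4]
  exact (smul_eq_zero.mp h5).resolve_left (by norm_num)

variable {ι' : Type*} [Fintype ι'] (P' : ι' → MvPolynomial (Fin (n + 1)) ℝ)
  (v' : ι' → CliffordAlgebra Q)

lemma iota_sum_smul (x : EuclideanSpace ℝ (Fin (n + 1))) :
    ι Q x = ∑ i, x i • ι Q (e i) := by
  conv_lhs => rw [← sum_smul_e x]
  rw [map_sum]
  exact Finset.sum_congr rfl fun i _ => by rw [map_smul]

lemma iota_e_mul_repFun (i₀ : Fin (n + 1)) (x : EuclideanSpace ℝ (Fin (n + 1))) :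
    ι Q (e i₀) * repFun P' v' x
      = ∑ j, MvPolynomial.eval (fun i => x i) (P' j) • (ι Q (e i₀) * v' j) := by
  rw [repFun, Finset.mul_sum]
  exact Finset.sum_congr rfl fun j _ => by rw [mul_smul_comm]

lemma iota_mul_repFun (x : EuclideanSpace ℝ (Fin (n + 1))) :
    ι Q x * repFun P' v' x =
      repFun (fun p : Fin (n + 1) × ι' => X p.1 * P' p.2)
        (fun p => ι Q (e p.1) * v' p.2) x := by
  rw [iota_sum_smul, Finset.sum_mul]
  show _ = ∑ p : Fin (n + 1) × ι', _
  rw [Fintype.sum_prod_type]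
  refine Finset.sum_congr rfl fun i _ => ?_
  rw [smul_mul_assoc, iota_e_mul_repFun, Finset.smul_sum]
  refine Finset.sum_congr rfl fun j _ => ?_
  rw [eval_mul, eval_X, smul_smul]

lemma fderiv_iota_mul (x : EuclideanSpace ℝ (Fin (n + 1))) (i₀ : Fin (n + 1)) :
    fderiv ℝ (fun y => ι Q y * repFun P' v' y) x (e i₀) =
      ι Q (e i₀) * repFun P' v' x +
        ι Q x * repFun (fun j => pderiv i₀ (P' j)) v' x := by
  have hfe : (fun y => ι Q y * repFun P' v' y) =
      repFun (fun p : Fin (n + 1) × ι' => X p.1 * P' p.2)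
        (fun p => ι Q (e p.1) * v' p.2) :=
    funext fun y => iota_mul_repFun P' v' y
  rw [hfe, fderiv_repFun_cl, iota_mul_repFun]
  have key : ∀ p : Fin (n + 1) × ι',
      MvPolynomial.eval (fun i => x i) (pderiv i₀ (X p.1 * P' p.2)) •
          (ι Q (e p.1) * v' p.2)
        = (if p.1 = i₀ then MvPolynomial.eval (fun i => x i) (P' p.2) •
              (ι Q (e p.1) * v' p.2) else 0)
          + MvPolynomial.eval (fun i => x i) (X p.1 * pderiv i₀ (P' p.2)) •
              (ι Q (e p.1) * v' p.2) := by
    intro p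
    rw [pderiv_mul, pderiv_X, map_add, add_smul, Pi.single_apply]
    congr 1
    rw [apply_ite (fun r : MvPolynomial (Fin (n+1)) ℝ =>
      MvPolynomial.eval (fun i => x i) (r * P' p.2))]
    rw [apply_ite (fun r : ℝ => r • (ι Q (e p.1) * v' p.2))]
    simp [eq_comm]
  show (∑ p : Fin (n + 1) × ι', _) = _
  rw [Finset.sum_congr rfl fun p _ => key p, Finset.sum_add_distrib]
  congr 1
  · rw [Fintype.sum_prod_type]
    have : ∀ i : Fin (n+1), (∑ j, if i = i₀ then
        MvPolynomial.eval (fun i' => x i') (P' j) • (ι Q (e i) * v' j) else 0)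
        = if i = i₀ then ι Q (e i₀) * repFun P' v' x else 0 := by
      intro i
      split_ifs with h
      · subst h; exact (iota_e_mul_repFun P' v' i x).symm
      · simp
    rw [Finset.sum_congr rfl fun i _ => this i, Finset.sum_ite_eq' Finset.univ i₀]
    simp
lemma repFun_smul_vec {k : ℕ} {V : Type*} [AddCommGroup V] [Module ℝ V] {ι : Type*} [Fintype ι]
    (P : ι → MvPolynomial (Fin k) ℝ) (v : ι → V) (s : ℝ) (x : EuclideanSpace ℝ (Fin k)) :
    repFun P (fun j => s • v j) x = s • repFun P v x := by
  rw [repFun, repFun, Finset.smul_sum]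
  exact Finset.sum_congr rfl fun j _ => smul_comm _ _ _

lemma mul_repFun {k : ℕ} {n' : ℕ} {Q : QuadraticForm ℝ (EuclideanSpace ℝ (Fin n'))}
    {ι : Type*} [Fintype ι] (a : CliffordAlgebra Q)
    (P : ι → MvPolynomial (Fin k) ℝ) (v : ι → CliffordAlgebra Q) (x : EuclideanSpace ℝ (Fin k)) :
    a * repFun P v x = repFun P (fun j => a * v j) x := by
  rw [repFun, repFun, Finset.mul_sum]
  exact Finset.sum_congr rfl fun j _ => (mul_smul_comm _ _ _)

section Cliff2
open MvPolynomial CliffordAlgebra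
variable {n : ℕ} {Q : QuadraticForm ℝ (EuclideanSpace ℝ (Fin (n + 1)))}
  {ι' : Type*} [Fintype ι'] (P' : ι' → MvPolynomial (Fin (n + 1)) ℝ)
  (v' : ι' → CliffordAlgebra Q)

lemma Dop_iota_mul (hQ : ∀ x, Q x = -‖x‖ ^ 2) (d : ℕ)
    (hhom : ∀ t : ℝ, 0 < t → ∀ x, repFun P' v' (t • x) = t ^ d • repFun P' v' x)
    (x : EuclideanSpace ℝ (Fin (n + 1))) :
    ∑ i, ι Q (e i) * fderiv ℝ (fun y => ι Q y * repFun P' v' y) x (e i)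
      = (-((n : ℝ) + 1 + 2 * d)) • repFun P' v' x
        - ι Q x * ∑ i, ι Q (e i) * fderiv ℝ (repFun P' v') x (e i) := by
  have hr : Differentiable ℝ (repFun P' v') := differentiable_repFun P' v'
  have heuler : ∑ i, x i • fderiv ℝ (repFun P' v') x (e i) = (d : ℝ) • repFun P' v' x :=
    euler_identity (repFun P' v') hr d hhom x
  have hstep : ∀ i, ι Q (e i) * fderiv ℝ (fun y => ι Q y * repFun P' v' y) x (e i)
      = (ι Q (e i) * ι Q (e i)) * repFun P' v' x
        + ((-(2 * x i)) • fderiv ℝ (repFun P' v') x (e i)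
           - ι Q x * (ι Q (e i) * fderiv ℝ (repFun P' v') x (e i))) := by
    intro i
    rw [fderiv_iota_mul, ← fderiv_repFun_cl, mul_add, ← mul_assoc, ← mul_assoc,
      iota_e_mul_iota hQ i x, sub_mul, smul_mul_assoc, one_mul]
    simp [mul_assoc]
  rw [Finset.sum_congr rfl fun i _ => hstep i, Finset.sum_add_distrib,
    Finset.sum_sub_distrib]
  have hA : ∑ i : Fin (n + 1), (ι Q (e i) * ι Q (e i)) * repFun P' v' x
      = (-((n : ℝ) + 1)) • repFun P' v' x := by
    rw [Finset.sum_congr rfl fun i _ => by rw [iota_e_sq hQ i, neg_one_mul]]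
    rw [Finset.sum_const, Finset.card_univ, Fintype.card_fin,
      ← Nat.cast_smul_eq_nsmul ℝ, smul_neg, ← neg_smul]
    norm_num
  have hB : ∑ i, (-(2 * x i)) • fderiv ℝ (repFun P' v') x (e i)
      = (-(2 * (d : ℝ))) • repFun P' v' x := by
    have : ∀ i, (-(2 * x i)) • fderiv ℝ (repFun P' v') x (e i)
        = (-2 : ℝ) • (x i • fderiv ℝ (repFun P' v') x (e i)) := by
      intro i; rw [smul_smul]; norm_num
    rw [Finset.sum_congr rfl fun i _ => this i, ← Finset.smul_sum, heuler, smul_smul]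
    norm_num
  have hC : ∑ i, ι Q x * (ι Q (e i) * fderiv ℝ (repFun P' v') x (e i))
      = ι Q x * ∑ i, ι Q (e i) * fderiv ℝ (repFun P' v') x (e i) :=
    (Finset.mul_sum _ _ _).symm
  rw [hA, hB, hC]
  module

end Cliff2

/-- Every harmonic polynomial map `h` into the Clifford algebra that is
homogeneous of degree `m ≥ 1` decomposes uniquely as `h x = p x + ι x * q x` with `p`, `q`
left monogenic polynomial maps, homogeneous of degrees `m` and `m - 1` respectively. -/
theorem harmonic_decomposition (n : ℕ) (hn : 1 ≤ n)
    (Q : QuadraticForm ℝ (EuclideanSpace ℝ (Fin (n + 1))))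
    (hQ : ∀ x, Q x = -‖x‖ ^ 2)
    (m : ℕ) (hm : 1 ≤ m)
    (h : EuclideanSpace ℝ (Fin (n + 1)) → CliffordAlgebra Q)
    (h_poly : IsPolynomialMap h)
    (h_hom : ∀ t : ℝ, 0 < t → ∀ x, h (t • x) = t ^ m • h x)
    (h_harm : ∀ x, ∑ i, fderiv ℝ (fun y => fderiv ℝ h y (e i)) x (e i) = 0) :
    ∃! pq : (EuclideanSpace ℝ (Fin (n + 1)) → CliffordAlgebra Q) ×
        (EuclideanSpace ℝ (Fin (n + 1)) → CliffordAlgebra Q),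
      IsPolynomialMap pq.1 ∧ IsPolynomialMap pq.2 ∧
      (∀ t : ℝ, 0 < t → ∀ x, pq.1 (t • x) = t ^ m • pq.1 x) ∧
      (∀ t : ℝ, 0 < t → ∀ x, pq.2 (t • x) = t ^ (m - 1) • pq.2 x) ∧
      (∀ x, ∑ i, CliffordAlgebra.ι Q (e i) * fderiv ℝ pq.1 x (e i) = 0) ∧
      (∀ x, ∑ i, CliffordAlgebra.ι Q (e i) * fderiv ℝ pq.2 x (e i) = 0) ∧
      (∀ x, h x = pq.1 x + CliffordAlgebra.ι Q x * pq.2 x) := by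
  classical
  obtain ⟨N, P, v, hrep⟩ := h_poly
  have hh : h = repFun P v := funext fun x => hrep x
  subst hh
  have hmd : m - 1 + 1 = m := Nat.succ_pred_eq_of_pos hm
  set c : ℝ := (n : ℝ) + 1 + 2 * ((m - 1 : ℕ) : ℝ) with hc
  have hcpos : (0 : ℝ) < c := by positivity
  have hcne : c ≠ 0 := ne_of_gt hcpos
  set DP : Fin (n + 1) × Fin N → MvPolynomial (Fin (n + 1)) ℝ :=
    fun p => pderiv p.1 (P p.2) with hDP
  set Dv : Fin (n + 1) × Fin N → CliffordAlgebra Q :=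
    fun p => ι Q (e p.1) * v p.2 with hDv
  set qv : Fin (n + 1) × Fin N → CliffordAlgebra Q :=
    fun p => (-(1 / c)) • Dv p with hqv
  set q : EuclideanSpace ℝ (Fin (n + 1)) → CliffordAlgebra Q := repFun DP qv with hq
  set p : EuclideanSpace ℝ (Fin (n + 1)) → CliffordAlgebra Q :=
    fun x => repFun P v x - ι Q x * q x with hp
  -- Dh as a repFun
  have hF1 : ∀ z, ∑ i, ι Q (e i) * fderiv ℝ (repFun P v) z (e i) = repFun DP Dv z := by
    intro z
    rw [Finset.sum_congr rfl fun i (_ : i ∈ Finset.univ) => by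
      rw [fderiv_repFun_cl, mul_repFun]]
    rw [show repFun DP Dv z = ∑ pr : Fin (n + 1) × Fin N,
      MvPolynomial.eval (fun i => z i) (DP pr) • Dv pr from rfl]
    rw [Fintype.sum_prod_type]
    rfl
  have hq_eq : ∀ z, q z = (-(1 / c)) • repFun DP Dv z := by
    intro z
    rw [hq, hqv]
    exact repFun_smul_vec DP Dv _ z
  -- homogeneity of the partial derivatives of h
  have hder_hom : ∀ t : ℝ, 0 < t → ∀ z i, fderiv ℝ (repFun P v) (t • z) (e i)
      = t ^ (m - 1) • fderiv ℝ (repFun P v) z (e i) :=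
    fun t ht z i => hom_fderiv _ (differentiable_repFun P v) m hm h_hom ht z (e i)
  have hqhom : ∀ t : ℝ, 0 < t → ∀ z, q (t • z) = t ^ (m - 1) • q z := by
    intro t ht z
    have hDh : repFun DP Dv (t • z) = t ^ (m - 1) • repFun DP Dv z := by
      rw [← hF1, ← hF1, Finset.smul_sum]
      exact Finset.sum_congr rfl fun i _ => by rw [hder_hom t ht z i, mul_smul_comm]
    rw [hq_eq, hq_eq, hDh, smul_comm]
  -- q is monogenic
  have hqmono : ∀ z, ∑ i, ι Q (e i) * fderiv ℝ q z (e i) = 0 := by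
    intro z
    have hfq : ∀ i, fderiv ℝ q z (e i)
        = (-(1 / c)) • repFun (fun pr => pderiv i (DP pr)) Dv z := by
      intro i
      rw [hq, fderiv_repFun_cl, hqv]
      exact repFun_smul_vec _ Dv _ z
    rw [Finset.sum_congr rfl fun i (_ : i ∈ Finset.univ) => by
      rw [hfq i, mul_smul_comm]]
    rw [← Finset.smul_sum]
    have hT : ∑ i, ι Q (e i) * repFun (fun pr => pderiv i (DP pr)) Dv z = 0 := by
      have hre : ∀ i, ι Q (e i) * repFun (fun pr => pderiv i (DP pr)) Dv z
          = ∑ i', ι Q (e i) * ι Q (e i') *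
              repFun (fun j : Fin N => pderiv i (pderiv i' (P j))) v z := by
        intro i
        rw [Finset.sum_congr rfl fun i' (_ : i' ∈ Finset.univ) => by
          rw [mul_assoc, mul_repFun, mul_repFun]]
        rw [mul_repFun]
        rw [show repFun (fun pr => pderiv i (DP pr)) (fun j => ι Q (e i) * Dv j) z
          = ∑ pr : Fin (n + 1) × Fin N, MvPolynomial.eval (fun i' => z i')
            (pderiv i (DP pr)) • (ι Q (e i) * Dv pr) from rfl]
        rw [Fintype.sum_prod_type]
        rfl
      rw [Finset.sum_congr rfl fun i (_ : i ∈ Finset.univ) => hre i]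
      refine clifford_symm_sum hQ _ (fun i j => ?_) ?_
      · refine Finset.sum_congr rfl fun j' _ => ?_
        show MvPolynomial.eval (fun i' => z i') (pderiv i (pderiv j (P j'))) • v j'
          = MvPolynomial.eval (fun i' => z i') (pderiv j (pderiv i (P j'))) • v j'
        rw [pderiv_comm']
      · have hharm := h_harm z
        rw [Finset.sum_congr rfl fun i (_ : i ∈ Finset.univ) => ?_] at hharm
        · exact hharm
        · rw [show (fun y => fderiv ℝ (repFun P v) y (e i))
            = repFun (fun j => pderiv i (P j)) v from funext fun y => fderiv_repFun P v y i]
          rw [fderiv_repFun_cl]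
    rw [hT, smul_zero]
  -- D(x * q) = Dh
  have hdiffiq : Differentiable ℝ (fun y => ι Q y * q y) := by
    rw [show (fun y => ι Q y * q y)
      = repFun (fun pr : Fin (n + 1) × (Fin (n + 1) × Fin N) => X pr.1 * DP pr.2)
        (fun pr => ι Q (e pr.1) * qv pr.2) from funext fun y => by
          rw [hq]; exact iota_mul_repFun DP qv y]
    exact differentiable_repFun _ _
  have hDq : ∀ z, ∑ i, ι Q (e i) * fderiv ℝ (fun y => ι Q y * q y) z (e i)
      = repFun DP Dv z := by
    intro z
    have hkey := Dop_iota_mul DP qv hQ (m - 1) (by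
      intro t ht x'
      have := hqhom t ht x'
      rw [hq] at this
      exact this) z
    rw [show repFun DP qv = q from hq.symm] at hkey
    rw [hkey, hqmono, mul_zero, sub_zero, hq_eq, smul_smul]
    have hXne : ((n : ℝ) + 1 + 2 * ((m - 1 : ℕ) : ℝ)) ≠ 0 := by positivity
    rw [show -((n : ℝ) + 1 + 2 * ((m - 1 : ℕ) : ℝ)) * -(1 / c) = 1 by
      rw [hc, neg_mul_neg, mul_one_div, div_self hXne]]
    rw [one_smul]
  -- p is monogenic
  have hpder : ∀ z i, fderiv ℝ p z (e i)
      = fderiv ℝ (repFun P v) z (e i) - fderiv ℝ (fun y => ι Q y * q y) z (e i) := by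
    intro z i
    rw [hp]
    exact DFunLike.congr_fun (fderiv_fun_sub ((differentiable_repFun P v) z) (hdiffiq z)) (e i)
  have hpmono : ∀ z, ∑ i, ι Q (e i) * fderiv ℝ p z (e i) = 0 := by
    intro z
    rw [Finset.sum_congr rfl fun i (_ : i ∈ Finset.univ) => by
      rw [hpder z i, mul_sub]]
    rw [Finset.sum_sub_distrib, hF1, hDq, sub_self]
  -- p is homogeneous
  have hphom : ∀ t : ℝ, 0 < t → ∀ z, p (t • z) = t ^ m • p z := by
    intro t ht z
    rw [hp]
    show repFun P v (t • z) - ι Q (t • z) * q (t • z) = t ^ m • (repFun P v z - ι Q z * q z)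
    rw [h_hom t ht z, hqhom t ht z, map_smul, smul_mul_assoc, mul_smul_comm, smul_smul,
      smul_sub]
    rw [show t * t ^ (m - 1) = t ^ m by rw [← pow_succ', Nat.sub_add_cancel hm]]
  -- polynomial maps
  have hqpoly : IsPolynomialMap q := by
    rw [hq]; exact isPolynomialMap_repFun DP qv
  have hppoly : IsPolynomialMap p := by
    rw [show p = repFun
        (Sum.elim P (fun pr : Fin (n + 1) × (Fin (n + 1) × Fin N) => X pr.1 * DP pr.2))
        (Sum.elim v (fun pr => -(ι Q (e pr.1) * qv pr.2))) from funext fun z => by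
      rw [repFun_sub_cl]
      show repFun P v z - ι Q z * q z = _
      rw [hq, iota_mul_repFun]]
    exact isPolynomialMap_repFun _ _
  have hdecomp : ∀ z, repFun P v z = p z + ι Q z * q z := by
    intro z
    show repFun P v z = (repFun P v z - ι Q z * q z) + ι Q z * q z
    abel
  refine ⟨⟨p, q⟩, ⟨hppoly, hqpoly, hphom, hqhom, hpmono, hqmono, hdecomp⟩, ?_⟩
  rintro ⟨p', q'⟩ ⟨hp'poly, hq'poly, hp'hom, hq'hom, hp'mono, hq'mono, hdec'⟩
  dsimp only at hp'poly hq'poly hp'hom hq'hom hp'mono hq'mono hdec'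
  obtain ⟨N', A, a, ha⟩ := hq'poly
  have hq'eq : q' = repFun A a := funext fun z => ha z
  obtain ⟨N'', B, b, hb⟩ := hp'poly
  have hp'eq : p' = repFun B b := funext fun z => hb z
  -- r := q' - q as a repFun
  set rv : Fin N' ⊕ (Fin (n + 1) × Fin N) → CliffordAlgebra Q :=
    Sum.elim a (fun j => -qv j) with hrv
  set R : Fin N' ⊕ (Fin (n + 1) × Fin N) → MvPolynomial (Fin (n + 1)) ℝ :=
    Sum.elim A DP with hR
  have hr_eq : ∀ z, repFun R rv z = q' z - q z := by
    intro z
    rw [hR, hrv, repFun_sub_cl, hq'eq, hq]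
  have hrhom : ∀ t : ℝ, 0 < t → ∀ z, repFun R rv (t • z) = t ^ (m - 1) • repFun R rv z := by
    intro t ht z
    rw [hr_eq, hr_eq, hq'hom t ht z, hqhom t ht z, smul_sub]
  have hrdiff : Differentiable ℝ (repFun R rv) := differentiable_repFun R rv
  have hq'diff : Differentiable ℝ q' := by
    rw [hq'eq]; exact differentiable_repFun A a
  have hqdiff : Differentiable ℝ q := by rw [hq]; exact differentiable_repFun DP qv
  have hrD : ∀ z, ∑ i, ι Q (e i) * fderiv ℝ (repFun R rv) z (e i) = 0 := by
    intro z
    have hfe : (repFun R rv) = fun y => q' y - q y := funext fun y => hr_eq y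
    rw [hfe]
    have hsub : ∀ i : Fin (n + 1), fderiv ℝ (fun y => q' y - q y) z (e i)
        = fderiv ℝ q' z (e i) - fderiv ℝ q z (e i) := by
      intro i
      exact DFunLike.congr_fun (fderiv_fun_sub (hq'diff z) (hqdiff z)) (e i)
    rw [Finset.sum_congr rfl fun i (_ : i ∈ Finset.univ) => by rw [hsub i, mul_sub]]
    rw [Finset.sum_sub_distrib, hq'mono z, hqmono z, sub_self]
  have hpdiff : Differentiable ℝ p := by
    rw [hp]
    exact (differentiable_repFun P v).sub hdiffiq
  have hp'diff : Differentiable ℝ p' := by rw [hp'eq]; exact differentiable_repFun B b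
  have hiota_r : (fun y => ι Q y * repFun R rv y) = fun y => p y - p' y := by
    funext y
    rw [hr_eq, mul_sub]
    have h1 : ι Q y * q' y = repFun P v y - p' y := eq_sub_of_add_eq' (hdec' y).symm
    have h2 : ι Q y * q y = repFun P v y - p y := eq_sub_of_add_eq' (hdecomp y).symm
    rw [h1, h2]
    abel
  have hr_zero : ∀ z, repFun R rv z = 0 := by
    intro z
    have hkey := Dop_iota_mul R rv hQ (m - 1) hrhom z
    rw [hrD z, mul_zero, sub_zero, hiota_r] at hkey
    have hsubp : ∀ i : Fin (n + 1), fderiv ℝ (fun y => p y - p' y) z (e i)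
        = fderiv ℝ p z (e i) - fderiv ℝ p' z (e i) := by
      intro i
      exact DFunLike.congr_fun (fderiv_fun_sub (hpdiff z) (hp'diff z)) (e i)
    rw [Finset.sum_congr rfl fun i (_ : i ∈ Finset.univ) => by
      rw [hsubp i, mul_sub]] at hkey
    rw [Finset.sum_sub_distrib, hpmono z, hp'mono z, sub_self] at hkey
    have hcn : -((n : ℝ) + 1 + 2 * ((m - 1 : ℕ) : ℝ)) ≠ 0 := by
      rw [← hc]
      exact neg_ne_zero.mpr hcne
    exact (smul_eq_zero.mp hkey.symm).resolve_left hcn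
  have hq'q : q' = q := by
    funext z
    have hz := hr_eq z
    rw [hr_zero z] at hz
    exact (sub_eq_zero.mp hz.symm)
  have hp'p : p' = p := by
    funext z
    have hd := hdec' z
    rw [hq'q] at hd
    have hd2 := hdecomp z
    exact add_right_cancel (hd.symm.trans hd2)
  exact Prod.ext hp'p hq'q
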